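/- In the algebra YB_R(A_{n-1}), for every z ∈ R one has ∏_{j=1}^{n} Θ_j(z) = 1, the product taken in increasing order of j. -/

import Mathlib

namespace Stmt4

/-- `i` is in the index range `{1, …, n}`. -/
def inR (n i : ℕ) : Prop := 1 ≤ i ∧ i ≤ n

/-- The defining relations (0)–(4) of the algebra `YB_R(A_{n-1})` for elements
`h i j x` (`1 ≤ i ≠ j ≤ n`, `x ∈ R`) of an associative `R`-algebra `A`,
where `R` is a commutative `ℚ`-algebra. -/
structure YBARels (n : ℕ) (R : Type*) [CommRing R] [Algebra ℚ R]
    {A : Type*} [Ring A] [Algebra R A] (h : ℕ → ℕ → R → A) : Prop where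
  rel0 : ∀ i j (x : R), inR n i → inR n j → i ≠ j → h i j x * h j i x = 1
  rel1 : ∀ i j (x y : R), inR n i → inR n j → i ≠ j →
      h i j x * h i j y = h i j (x + y)
  rel2 : ∀ i j k l (x y : R), inR n i → inR n j → inR n k → inR n l →
      i ≠ j → i ≠ k → i ≠ l → j ≠ k → j ≠ l → k ≠ l →
      h i j x * h k l y = h k l y * h i j x
  rel3a : ∀ i j k (x y : R), 1 ≤ i → i < j → j < k → k ≤ n →
      h i j x * h j k y + h i k (x + y) = h j k y * h i k x + h i k y * h i j x
  rel3b : ∀ i j k (x y : R), 1 ≤ i → i < j → j < k → k ≤ n →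
      h j k y * h i j x + h i k (x + y) = h i k x * h j k y + h i j x * h i k y
  rel4 : ∀ i j k (x y : R), 1 ≤ i → i < j → j < k → k ≤ n →
      h i k x * (h i j x - h i k y) * h i j y = h i j y * (h i j x - h i k y) * h i k x

/-- The multiplicative (RSM) Dunkl element
`Θ_j(z) = h_{j-1,j}(z)⁻¹ ⋯ h_{1,j}(z)⁻¹ · h_{j,n}(z) ⋯ h_{j,j+1}(z)`,
where `h_{ij}(z)⁻¹ = h_{ij}(-z)`. -/
def ThetaA (n : ℕ) {R : Type*} [CommRing R] {A : Type*} [Ring A]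
    (h : ℕ → ℕ → R → A) (z : R) (j : ℕ) : A :=
  ((List.range' 1 (j - 1)).reverse.map fun i => h i j (-z)).prod *
    ((List.range' (j + 1) (n - j)).reverse.map fun k => h j k z).prod

section Aux

variable {n : ℕ} {R : Type*} [CommRing R] [Algebra ℚ R] {A : Type*} [Ring A] [Algebra R A]
  {h : ℕ → ℕ → R → A}

lemma h_zero (rels : YBARels n R h) {i j : ℕ} (hi : inR n i) (hj : inR n j) (hij : i ≠ j) :
    h i j 0 = 1 := by
  have h1 : h i j 0 * h i j 0 = h i j 0 := by
    have := rels.rel1 i j 0 0 hi hj hij; simpa using this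
  have h2 := rels.rel0 i j 0 hi hj hij
  calc h i j 0 = h i j 0 * (h i j 0 * h j i 0) := by rw [h2, mul_one]
    _ = (h i j 0 * h i j 0) * h j i 0 := by rw [mul_assoc]
    _ = h i j 0 * h j i 0 := by rw [h1]
    _ = 1 := h2

lemma h_cancel (rels : YBARels n R h) {i j : ℕ} (hi : inR n i) (hj : inR n j) (hij : i ≠ j)
    (z : R) : h i j z * h i j (-z) = 1 := by
  rw [rels.rel1 i j z (-z) hi hj hij, add_neg_cancel, h_zero rels hi hj hij]

/-- row product `h i (s+t-1) z * ⋯ * h i s z`. -/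
def rowP (h : ℕ → ℕ → R → A) (z : R) (i s t : ℕ) : A :=
  ((List.range' s t).reverse.map fun k => h i k z).prod

/-- `h j m (-z) * ⋯ * h 1 m (-z)`. -/
def negP (h : ℕ → ℕ → R → A) (z : R) (m j : ℕ) : A :=
  ((List.range' 1 j).reverse.map fun i => h i m (-z)).prod

def QP (h : ℕ → ℕ → R → A) (z : R) (n m : ℕ) : A :=
  ((List.range' 1 m).map fun i => rowP h z i (m + 1) (n - m)).prod

lemma rowP_split (z : R) (i s t : ℕ) :
    rowP h z i s (t + 1) = rowP h z i (s + 1) t * h i s z := by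
  simp [rowP, List.range'_succ]

lemma range'_split (j : ℕ) : List.range' 1 (j + 1) = List.range' 1 j ++ [j + 1] := by
  have := List.range'_concat (step := 1) (s := 1) (n := j)
  simpa [Nat.add_comm] using this

lemma negP_succ (z : R) (m j : ℕ) :
    negP h z m (j + 1) = h (j + 1) m (-z) * negP h z m j := by
  simp [negP, range'_split]

lemma key (rels : YBARels n R h) (z : R) (m : ℕ) (hm : m + 1 ≤ n) :
    ∀ j, j ≤ m →
    ((List.range' 1 j).map fun i => rowP h z i (m + 1) (n - m)).prod * negP h z (m + 1) j
      = ((List.range' 1 j).map fun i => rowP h z i (m + 2) (n - m - 1)).prod := by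
  intro j
  induction j with
  | zero => intro _; simp [negP]
  | succ j ih =>
    intro hjm
    have hrange := range'_split j
    have hrow : rowP h z (j + 1) (m + 1) (n - m)
        = rowP h z (j + 1) (m + 2) (n - m - 1) * h (j + 1) (m + 1) z := by
      obtain ⟨t, ht, ht2⟩ : ∃ t, n - m = t + 1 ∧ t = n - m - 1 := ⟨n - m - 1, by omega, rfl⟩
      conv_lhs => rw [ht, rowP_split]
      rw [ht2]
    -- commuting of the truncated row with the remaining negative factors
    have hcomm : Commute (rowP h z (j + 1) (m + 2) (n - m - 1)) (negP h z (m + 1) j) := by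
      apply Commute.list_prod_right
      intro x hx
      simp only [List.mem_map, List.mem_reverse, List.mem_range'_1] at hx
      obtain ⟨i, hi, rfl⟩ := hx
      apply Commute.list_prod_left
      intro y hy
      simp only [List.mem_map, List.mem_reverse, List.mem_range'_1] at hy
      obtain ⟨k, hk, rfl⟩ := hy
      show h (j + 1) k z * h i (m + 1) (-z) = h i (m + 1) (-z) * h (j + 1) k z
      exact rels.rel2 (j + 1) k i (m + 1) z (-z)
        ⟨by omega, by omega⟩ ⟨by omega, by omega⟩ ⟨by omega, by omega⟩ ⟨by omega, by omega⟩
        (by omega) (by omega) (by omega) (by omega) (by omega) (by omega)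
    calc ((List.range' 1 (j + 1)).map fun i => rowP h z i (m + 1) (n - m)).prod
          * negP h z (m + 1) (j + 1)
        = (((List.range' 1 j).map fun i => rowP h z i (m + 1) (n - m)).prod
            * rowP h z (j + 1) (m + 1) (n - m))
            * (h (j + 1) (m + 1) (-z) * negP h z (m + 1) j) := by
          rw [hrange, negP_succ]; simp
      _ = ((List.range' 1 j).map fun i => rowP h z i (m + 1) (n - m)).prod
            * (rowP h z (j + 1) (m + 2) (n - m - 1)
              * ((h (j + 1) (m + 1) z * h (j + 1) (m + 1) (-z)) * negP h z (m + 1) j)) := by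
          rw [hrow]; simp only [mul_assoc]
      _ = ((List.range' 1 j).map fun i => rowP h z i (m + 1) (n - m)).prod
            * (rowP h z (j + 1) (m + 2) (n - m - 1) * negP h z (m + 1) j) := by
          rw [h_cancel rels ⟨by omega, by omega⟩ ⟨by omega, by omega⟩ (by omega) z, one_mul]
      _ = (((List.range' 1 j).map fun i => rowP h z i (m + 1) (n - m)).prod
            * negP h z (m + 1) j) * rowP h z (j + 1) (m + 2) (n - m - 1) := by
          rw [hcomm.eq, mul_assoc]
      _ = ((List.range' 1 j).map fun i => rowP h z i (m + 2) (n - m - 1)).prod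
            * rowP h z (j + 1) (m + 2) (n - m - 1) := by
          rw [ih (by omega)]
      _ = ((List.range' 1 (j + 1)).map fun i => rowP h z i (m + 2) (n - m - 1)).prod := by
          rw [hrange]; simp

lemma Q_step (rels : YBARels n R h) (z : R) (m : ℕ) (hm : m + 1 ≤ n) :
    QP h z n m * ThetaA n h z (m + 1) = QP h z n (m + 1) := by
  have hth : ThetaA n h z (m + 1)
      = negP h z (m + 1) m * rowP h z (m + 1) (m + 2) (n - (m + 1)) := by
    simp [ThetaA, negP, rowP]
  have hrange := range'_split m
  have hk := key rels z m hm m le_rfl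
  have h1 : n - m - 1 = n - (m + 1) := by omega
  rw [hth, ← mul_assoc, QP, hk, QP, hrange]
  simp [h1]

end Aux

/-- in `YB_R(A_{n-1})`, for every `z ∈ R` one has
`Θ_1(z) Θ_2(z) ⋯ Θ_n(z) = 1` (the product in increasing order of `j`). -/
theorem prod_RSM_elements_eq_one_in_YBA (n : ℕ) (hn : 2 ≤ n)
    (R : Type*) [CommRing R] [Algebra ℚ R] (A : Type*) [Ring A] [Algebra R A]
    (h : ℕ → ℕ → R → A) (rels : YBARels n R h) :
    ∀ z : R, ((List.range' 1 n).map fun j => ThetaA n h z j).prod = 1 := by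
  intro z
  have main : ∀ m, m ≤ n →
      ((List.range' 1 m).map fun j => ThetaA n h z j).prod = QP h z n m := by
    intro m
    induction m with
    | zero => intro _; simp [QP]
    | succ m ih =>
      intro hmn
      rw [range'_split m]
      simp only [List.map_append, List.prod_append, List.map_cons, List.map_nil,
        List.prod_cons, List.prod_nil, mul_one]
      rw [ih (by omega), Q_step rels z m hmn]
  rw [main n le_rfl]
  apply List.prod_eq_one
  intro x hx
  simp only [List.mem_map, List.mem_range'_1] at hx
  obtain ⟨i, _, rfl⟩ := hx
  simp [rowP, QP]

end Stmt4
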